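/- Let G be the graph on vertices x_1, x_2, x_3, y_1, …, y_5 whose edges are: all 15 edges between {x_1,x_2,x_3} and {y_1,…,y_5}, the three edges x_1x_2, x_1x_3, x_2x_3, and the four edges y_1y_2, y_1y_3, y_1y_4, y_1y_5. Let ψ be a proper edge-colouring of G such that the subgraph consisting of the triangle on {x_1,x_2,x_3} and all 15 cross edges is rainbow. Then G contains a rainbow copy of K_5 under ψ. -/

import Mathlib

/-- Let `G = K̃_{3,5}` be the graph on `x₁,x₂,x₃` (the `Fin 3` side) and
`y₁,…,y₅` (the `Fin 5` side, `y₁ = 0`) with all 15 cross edges, the triangle on the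
3-side, and the star `y₁y₂, y₁y₃, y₁y₄, y₁y₅`. If `ψ` is a proper edge-colouring of
`G` under which the subgraph consisting of the triangle together with all 15 cross
edges is rainbow, then `G` contains a rainbow copy of `K₅` under `ψ`. -/
theorem stmt_9 (C : Type) (G : SimpleGraph (Fin 3 ⊕ Fin 5))
    (hG : ∀ u v, G.Adj u v ↔
      ((∃ a b : Fin 3, a ≠ b ∧ u = Sum.inl a ∧ v = Sum.inl b) ∨
       (∃ (a : Fin 3) (b : Fin 5),
          (u = Sum.inl a ∧ v = Sum.inr b) ∨ (u = Sum.inr b ∧ v = Sum.inl a)) ∨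
       (∃ b : Fin 5, b ≠ 0 ∧
          ((u = Sum.inr 0 ∧ v = Sum.inr b) ∨ (u = Sum.inr b ∧ v = Sum.inr 0)))))
    (ψ : Sym2 (Fin 3 ⊕ Fin 5) → C)
    (hproper : ∀ a b c, G.Adj a b → G.Adj a c → b ≠ c → ψ s(a, b) ≠ ψ s(a, c))
    (hrainbow : ∀ e ∈ G.edgeSet, ∀ f ∈ G.edgeSet,
      (∀ b b' : Fin 5, e ≠ s(Sum.inr b, Sum.inr b')) →
      (∀ b b' : Fin 5, f ≠ s(Sum.inr b, Sum.inr b')) →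
      ψ e = ψ f → e = f) :
    ∃ v0 v1 v2 v3 v4 : Fin 3 ⊕ Fin 5,
      G.Adj v0 v1 ∧ G.Adj v0 v2 ∧ G.Adj v0 v3 ∧ G.Adj v0 v4 ∧
      G.Adj v1 v2 ∧ G.Adj v1 v3 ∧ G.Adj v1 v4 ∧
      G.Adj v2 v3 ∧ G.Adj v2 v4 ∧ G.Adj v3 v4 ∧
      ([ψ s(v0, v1), ψ s(v0, v2), ψ s(v0, v3), ψ s(v0, v4), ψ s(v1, v2),
        ψ s(v1, v3), ψ s(v1, v4), ψ s(v2, v3), ψ s(v2, v4), ψ s(v3, v4)]).Nodup := by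
  classical
  set x0 : Fin 3 ⊕ Fin 5 := Sum.inl 0 with hx0
  set x1 : Fin 3 ⊕ Fin 5 := Sum.inl 1 with hx1
  set x2 : Fin 3 ⊕ Fin 5 := Sum.inl 2 with hx2
  set y0 : Fin 3 ⊕ Fin 5 := Sum.inr 0 with hy0
  -- basic adjacency facts
  have adjxx : ∀ a a' : Fin 3, a ≠ a' → G.Adj (Sum.inl a) (Sum.inl a') := by
    intro a a' h
    exact (hG _ _).2 (Or.inl ⟨a, a', h, rfl, rfl⟩)
  have adjxy : ∀ (a : Fin 3) (c : Fin 5), G.Adj (Sum.inl a) (Sum.inr c) := by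
    intro a c
    exact (hG _ _).2 (Or.inr (Or.inl ⟨a, c, Or.inl ⟨rfl, rfl⟩⟩))
  have adjyy : ∀ c : Fin 5, c ≠ 0 → G.Adj (Sum.inr 0) (Sum.inr c) := by
    intro c h
    exact (hG _ _).2 (Or.inr (Or.inr ⟨c, h, Or.inl ⟨rfl, rfl⟩⟩))
  -- star colours
  set t1 := ψ s(x0, x1) with ht1
  set t2 := ψ s(x0, x2) with ht2
  set t3 := ψ s(x1, x2) with ht3
  -- choose b ≠ 0 with star colour distinct from triangle colours
  have key : ∃ b : Fin 5, b ≠ 0 ∧ ψ s(y0, Sum.inr b) ≠ t1 ∧ ψ s(y0, Sum.inr b) ≠ t2 ∧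
      ψ s(y0, Sum.inr b) ≠ t3 := by
    by_contra hcon
    push_neg at hcon
    have hd : ∀ c c' : Fin 5, c ≠ 0 → c' ≠ 0 → c ≠ c' →
        ψ s(y0, Sum.inr c) ≠ ψ s(y0, Sum.inr c') := by
      intro c c' hc hc' hcc'
      exact hproper y0 (Sum.inr c) (Sum.inr c') (adjyy c hc) (adjyy c' hc')
        (fun h => hcc' (Sum.inr.inj h))
    have mem : ∀ c : Fin 5, c ≠ 0 → ψ s(y0, Sum.inr c) = t1 ∨
        ψ s(y0, Sum.inr c) = t2 ∨ ψ s(y0, Sum.inr c) = t3 := by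
      intro c hc
      by_cases h1 : ψ s(y0, Sum.inr c) = t1
      · exact Or.inl h1
      by_cases h2 : ψ s(y0, Sum.inr c) = t2
      · exact Or.inr (Or.inl h2)
      exact Or.inr (Or.inr (hcon c hc h1 h2))
    have m1 := mem 1 (by decide)
    have m2 := mem 2 (by decide)
    have m3 := mem 3 (by decide)
    have m4 := mem 4 (by decide)
    have d12 := hd 1 2 (by decide) (by decide) (by decide)
    have d13 := hd 1 3 (by decide) (by decide) (by decide)
    have d14 := hd 1 4 (by decide) (by decide) (by decide)
    have d23 := hd 2 3 (by decide) (by decide) (by decide)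
    have d24 := hd 2 4 (by decide) (by decide) (by decide)
    have d34 := hd 3 4 (by decide) (by decide) (by decide)
    rcases m1 with e1 | e1 | e1 <;> rcases m2 with e2 | e2 | e2 <;>
      rcases m3 with e3 | e3 | e3 <;> rcases m4 with e4 | e4 | e4 <;>
      first
        | exact d12 (e1.trans e2.symm)
        | exact d13 (e1.trans e3.symm)
        | exact d14 (e1.trans e4.symm)
        | exact d23 (e2.trans e3.symm)
        | exact d24 (e2.trans e4.symm)
        | exact d34 (e3.trans e4.symm)
  obtain ⟨b, hb, hbt1, hbt2, hbt3⟩ := key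
  set yb : Fin 3 ⊕ Fin 5 := Sum.inr b with hyb
  -- rainbow on non-star edges
  have rb : ∀ u v u' v' : Fin 3 ⊕ Fin 5, G.Adj u v → G.Adj u' v' →
      (∀ c c' : Fin 5, s(u, v) ≠ s(Sum.inr c, Sum.inr c')) →
      (∀ c c' : Fin 5, s(u', v') ≠ s(Sum.inr c, Sum.inr c')) →
      s(u, v) ≠ s(u', v') → ψ s(u, v) ≠ ψ s(u', v') := by
    intro u v u' v' h h' hn hn' hne hc
    exact hne (hrainbow _ (G.mem_edgeSet.2 h) _ (G.mem_edgeSet.2 h') hn hn' hc)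
  refine ⟨x0, x1, x2, y0, yb, adjxx 0 1 (by decide), adjxx 0 2 (by decide),
    adjxy 0 0, adjxy 0 b, adjxx 1 2 (by decide), adjxy 1 0, adjxy 1 b,
    adjxy 2 0, adjxy 2 b, adjyy b hb, ?_⟩
  -- star edge vs cross edges via properness
  have star0 : ∀ a : Fin 3, ψ s(y0, yb) ≠ ψ s(Sum.inl a, y0) := by
    intro a hc
    refine hproper y0 yb (Sum.inl a) (adjyy b hb) ((adjxy a 0).symm) (by simp [hyb]) ?_
    rw [hc, Sym2.eq_swap]
  have starb : ∀ a : Fin 3, ψ s(y0, yb) ≠ ψ s(Sum.inl a, yb) := by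
    intro a hc
    refine hproper yb y0 (Sum.inl a) ((adjyy b hb).symm) ((adjxy a b).symm)
      (by simp [hy0]) ?_
    rw [Sym2.eq_swap] at hc
    rw [hc, Sym2.eq_swap]
  have notstar : ∀ (a : Fin 3) (w : Fin 3 ⊕ Fin 5) (c c' : Fin 5),
      s(Sum.inl a, w) ≠ s(Sum.inr c, Sum.inr c') := by
    intro a w c c'
    simp [Sym2.eq_iff]
  have notstar' : ∀ (a : Fin 3) (w : Fin 3 ⊕ Fin 5) (c c' : Fin 5),
      s(w, Sum.inl a) ≠ s(Sum.inr c, Sum.inr c') := by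
    intro a w c c'
    simp [Sym2.eq_iff]
  simp only [List.nodup_cons, List.mem_cons, List.not_mem_nil, or_false,
    List.nodup_nil, and_true]
  push_neg
  refine ⟨⟨?_, ?_, ?_, ?_, ?_, ?_, ?_, ?_, ?_⟩, ⟨?_, ?_, ?_, ?_, ?_, ?_, ?_, ?_⟩,
    ⟨?_, ?_, ?_, ?_, ?_, ?_, ?_⟩, ⟨?_, ?_, ?_, ?_, ?_, ?_⟩, ⟨?_, ?_, ?_, ?_, ?_⟩,
    ⟨?_, ?_, ?_, ?_⟩, ⟨?_, ?_, ?_⟩, ⟨?_, ?_⟩, ⟨?_, trivial⟩⟩ <;>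
    first
      | (apply rb _ _ _ _ (by first | exact adjxx _ _ (by decide) | exact adjxy _ _)
          (by first | exact adjxx _ _ (by decide) | exact adjxy _ _)
          (notstar _ _)
          (notstar _ _)
          (by simp [hx0, hx1, hx2, hy0, hyb, Sym2.eq_iff, hb, Ne.symm hb]))
      | (intro hc; exact (star0 _) hc.symm)
      | (intro hc; exact (starb _) hc.symm)
      | (intro hc; exact hbt1 hc.symm)
      | (intro hc; exact hbt2 hc.symm)
      | (intro hc; exact hbt3 hc.symm)
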